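/- arXiv:2002.03690 — 7 statements merged into one kernel-verified Lean document; each statement's English description precedes it below -/
import Mathlib

section
/- For all real numbers a, b: ((log((1+tanh(a/2))/(1+tanh(b/2))))² + (log((1-tanh(a/2))/(1-tanh(b/2))))²)/2 ≤ (a - b)²/2. In particular the average of the two squared log-differences is at most half the squared distance. -/
open Real

lemma abs_tanh_lt_one' (t : ℝ) : |Real.tanh t| < 1 := by
  rw [Real.tanh_eq_sinh_div_cosh, abs_div, abs_of_pos (Real.cosh_pos t),
    div_lt_one (Real.cosh_pos t)]
  nlinarith [sq_abs (Real.sinh t), Real.cosh_pos t, Real.cosh_sq t, abs_nonneg (Real.sinh t)]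

lemma logcosh_hasDeriv (x : ℝ) :
    HasDerivAt (fun x => Real.log (Real.cosh x)) (Real.tanh x) x := by
  have h := (Real.hasDerivAt_log (Real.cosh_pos x).ne').comp x (Real.hasDerivAt_cosh x)
  simpa [Function.comp_def, Real.tanh_eq_sinh_div_cosh, div_eq_mul_inv, mul_comm] using h

lemma logcosh_lip : LipschitzWith 1 (fun x : ℝ => Real.log (Real.cosh x)) := by
  apply lipschitzWith_of_nnnorm_deriv_le (fun x => (logcosh_hasDeriv x).differentiableAt)
  intro x
  rw [(logcosh_hasDeriv x).deriv]
  simp only [← NNReal.coe_le_coe, coe_nnnorm, Real.norm_eq_abs, NNReal.coe_one]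
  exact le_of_lt (abs_tanh_lt_one' x)

lemma log_one_add_tanh (t : ℝ) :
    Real.log (1 + Real.tanh t) = t - Real.log (Real.cosh t) := by
  have h : 1 + Real.tanh t = Real.exp t / Real.cosh t := by
    rw [Real.tanh_eq_sinh_div_cosh, ← Real.cosh_add_sinh]
    field_simp
  rw [h, Real.log_div (Real.exp_pos t).ne' (Real.cosh_pos t).ne', Real.log_exp]

lemma log_one_sub_tanh (t : ℝ) :
    Real.log (1 - Real.tanh t) = -t - Real.log (Real.cosh t) := by
  have h : 1 - Real.tanh t = Real.exp (-t) / Real.cosh t := by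
    rw [Real.tanh_eq_sinh_div_cosh, ← Real.cosh_sub_sinh]
    field_simp
  rw [h, Real.log_div (Real.exp_pos _).ne' (Real.cosh_pos t).ne', Real.log_exp]

/-- For all real `a, b`, the average of the two squared log-differences is at most half
of the squared distance:
`((log((1+tanh(a/2))/(1+tanh(b/2))))² + (log((1-tanh(a/2))/(1-tanh(b/2))))²)/2 ≤ (a-b)²/2`. -/
theorem stmt_2 (a b : ℝ) :
    ((Real.log ((1 + Real.tanh (a / 2)) / (1 + Real.tanh (b / 2)))) ^ 2 +
        (Real.log ((1 - Real.tanh (a / 2)) / (1 - Real.tanh (b / 2)))) ^ 2) / 2 ≤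
      (a - b) ^ 2 / 2 := by
  set A := a / 2
  set B := b / 2
  have h1p : ∀ t : ℝ, (0:ℝ) < 1 + Real.tanh t := fun t => by
    nlinarith [abs_lt.mp (abs_tanh_lt_one' t)]
  have h1m : ∀ t : ℝ, (0:ℝ) < 1 - Real.tanh t := fun t => by
    nlinarith [abs_lt.mp (abs_tanh_lt_one' t)]
  rw [Real.log_div (h1p A).ne' (h1p B).ne', Real.log_div (h1m A).ne' (h1m B).ne',
    log_one_add_tanh, log_one_add_tanh, log_one_sub_tanh, log_one_sub_tanh]
  have hlip := logcosh_lip.dist_le_mul A B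
  rw [Real.dist_eq, Real.dist_eq, NNReal.coe_one, one_mul] at hlip
  have hw : (Real.log (Real.cosh A) - Real.log (Real.cosh B)) ^ 2 ≤ (A - B) ^ 2 := by
    nlinarith [abs_nonneg (Real.log (Real.cosh A) - Real.log (Real.cosh B)),
      sq_abs (Real.log (Real.cosh A) - Real.log (Real.cosh B)), sq_abs (A - B),
      abs_nonneg (A - B)]
  have hab : a - b = 2 * (A - B) := by simp [A, B]; ring
  rw [hab]
  nlinarith [hw]
end

section
/- For all real numbers a, b: |log((1+tanh(a/2))/(1+tanh(b/2)))| + |log((1-tanh(a/2))/(1-tanh(b/2)))| ≤ |a - b|. -/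
open Real

lemma tanh_half' (z : ℝ) : Real.tanh (z/2) = (Real.exp z - 1)/(Real.exp z + 1) := by
  have h2 : Real.exp z = Real.exp (z/2) * Real.exp (z/2) := by
    rw [← Real.exp_add]; ring_nf
  have hp := Real.exp_pos (z/2)
  have hq := Real.exp_pos z
  rw [Real.tanh_eq_sinh_div_cosh, Real.sinh_eq, Real.cosh_eq, Real.exp_neg]
  rw [h2]
  field_simp

lemma plus_half (z : ℝ) : 1 + Real.tanh (z/2) = 2*Real.exp z/(Real.exp z + 1) := by
  rw [tanh_half']
  have : Real.exp z + 1 > 0 := by positivity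
  field_simp
  ring

lemma minus_half (z : ℝ) : 1 - Real.tanh (z/2) = 2/(Real.exp z + 1) := by
  rw [tanh_half']
  have : Real.exp z + 1 > 0 := by positivity
  field_simp
  ring

lemma key (a b : ℝ) (hab : b ≤ a) :
    |Real.log ((1 + Real.tanh (a / 2)) / (1 + Real.tanh (b / 2)))| +
      |Real.log ((1 - Real.tanh (a / 2)) / (1 - Real.tanh (b / 2)))| ≤ |a - b| := by
  have hA := Real.exp_pos a
  have hB := Real.exp_pos b
  have hA1 : Real.exp a + 1 > 0 := by positivity
  have hB1 : Real.exp b + 1 > 0 := by positivity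
  set L : ℝ := Real.log (Real.exp a + 1) - Real.log (Real.exp b + 1) with hL
  have hAB : Real.exp b ≤ Real.exp a := Real.exp_le_exp.2 hab
  have hL0 : 0 ≤ L := by
    apply sub_nonneg.2
    exact Real.log_le_log (by positivity) (by linarith)
  have hLle : L ≤ a - b := by
    have h1 : Real.log (Real.exp a + 1) ≤ Real.log (Real.exp (a - b) * (Real.exp b + 1)) := by
      apply Real.log_le_log hA1
      have : Real.exp a = Real.exp (a-b) * Real.exp b := by rw [← Real.exp_add]; ring_nf
      rw [this]
      have he : (1:ℝ) ≤ Real.exp (a-b) := Real.one_le_exp (by linarith)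
      nlinarith [Real.exp_pos (a-b)]
    rw [Real.log_mul (by positivity) (by positivity), Real.log_exp] at h1
    linarith
  have e1 : Real.log ((1 + Real.tanh (a / 2)) / (1 + Real.tanh (b / 2))) = (a - b) - L := by
    rw [plus_half, plus_half]
    rw [Real.log_div (by positivity) (by positivity)]
    rw [Real.log_div (by positivity) (by positivity)]
    rw [Real.log_div (by positivity) (by positivity)]
    rw [Real.log_mul two_ne_zero (ne_of_gt hA), Real.log_mul two_ne_zero (ne_of_gt hB),
      Real.log_exp, Real.log_exp]
    ring
  have e2 : Real.log ((1 - Real.tanh (a / 2)) / (1 - Real.tanh (b / 2))) = -L := by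
    rw [minus_half, minus_half]
    rw [Real.log_div (by positivity) (by positivity)]
    rw [Real.log_div (by positivity) (by positivity)]
    rw [Real.log_div (by positivity) (by positivity)]
    ring
  rw [e1, e2, abs_of_nonneg (by linarith), abs_neg, abs_of_nonneg hL0,
    abs_of_nonneg (by linarith : (0:ℝ) ≤ a - b)]
  linarith

/-- For all real `a, b`:
`|log((1+tanh(a/2))/(1+tanh(b/2)))| + |log((1-tanh(a/2))/(1-tanh(b/2)))| ≤ |a - b|`. -/
theorem stmt_3 (a b : ℝ) :
    |Real.log ((1 + Real.tanh (a / 2)) / (1 + Real.tanh (b / 2)))| +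
      |Real.log ((1 - Real.tanh (a / 2)) / (1 - Real.tanh (b / 2)))| ≤ |a - b| := by
  rcases le_total b a with h | h
  · exact key a b h
  · have hm : ∀ z : ℝ, (1 - Real.tanh (z/2)) ≠ 0 := by
      intro z; rw [minus_half]; positivity
    have hp : ∀ z : ℝ, (1 + Real.tanh (z/2)) ≠ 0 := by
      intro z; rw [plus_half]; positivity
    have := key b a h
    rw [Real.log_div (hp b) (hp a), Real.log_div (hm b) (hm a), abs_sub_comm,
      abs_sub_comm (Real.log (1 - Real.tanh (b/2))), abs_sub_comm b a] at this
    rwa [Real.log_div (hp a) (hp b), Real.log_div (hm a) (hm b)]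
end

section
/- Let η be a real-valued random variable whose distribution is symmetric (η and -η are identically distributed), and let s, s' be independent uniform random signs in {±1}, independent of η. Then the random variables s·log((1 - s·tanh(η/2))/2) and s·log((1 + s'·tanh(η/2))/2) are identically distributed. -/
open MeasureTheory ProbabilityTheory Real

lemma aux_prod_smul_right {α β : Type*} [MeasurableSpace α] [MeasurableSpace β]
    (μ : Measure α) (ν : Measure β) [SigmaFinite μ] [IsFiniteMeasure ν]
    (c : ENNReal) (hc : c ≠ ⊤) : μ.prod (c • ν) = c • (μ.prod ν) := by
  haveI : IsFiniteMeasure (c • ν) := by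
    constructor
    rw [Measure.smul_apply, smul_eq_mul]
    exact ENNReal.mul_lt_top hc.lt_top (measure_lt_top ν _)
  refine Measure.prod_eq fun s t hs ht => ?_
  simp [Measure.prod_prod, mul_comm, mul_left_comm]

/-- Pushing forward `ρ ⊗ (½ δ_y + ½ δ_z)` by `F` gives the corresponding mixture. -/
lemma aux_mix {α γ : Type*} [MeasurableSpace α] [MeasurableSpace γ]
    (ρ : Measure α) [SigmaFinite ρ] (y z : ℝ) (F : α × ℝ → γ) (hF : Measurable F) :
    (ρ.prod ((1/2 : ENNReal) • Measure.dirac y + (1/2 : ENNReal) • Measure.dirac z)).map F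
      = (1/2 : ENNReal) • ρ.map (fun x => F (x, y))
        + (1/2 : ENNReal) • ρ.map (fun x => F (x, z)) := by
  rw [Measure.prod_add, aux_prod_smul_right _ _ _ (by norm_num),
    aux_prod_smul_right _ _ _ (by norm_num), Measure.prod_dirac, Measure.prod_dirac,
    Measure.map_add _ _ hF, Measure.map_smul, Measure.map_smul,
    Measure.map_map hF measurable_prodMk_right,
    Measure.map_map hF measurable_prodMk_right]
  rfl

lemma aux_meas_tanh : Measurable Real.tanh := by
  have heq : Real.tanh = fun x => Real.sinh x / Real.cosh x :=
    funext fun x => Real.tanh_eq_sinh_div_cosh x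
  rw [heq]
  exact (Real.continuous_sinh.div Real.continuous_cosh
    (fun x => (Real.cosh_pos x).ne')).measurable

/-- Let `η` be a real random variable with symmetric distribution, and `s, s'` independent
uniform random signs in `{±1}`, with `η, s, s'` mutually independent. Then
`s · log((1 - s·tanh(η/2))/2)` and `s · log((1 + s'·tanh(η/2))/2)` are identically
distributed. -/
theorem stmt_4 {Ω : Type*} [MeasurableSpace Ω] (μ : Measure Ω) [IsProbabilityMeasure μ]
    (η s s' : Ω → ℝ) (hη : Measurable η) (hs : Measurable s) (hs' : Measurable s')
    (hsym : μ.map η = μ.map (fun ω => -η ω))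
    (hslaw : μ.map s = (1/2 : ENNReal) • Measure.dirac (1 : ℝ)
        + (1/2 : ENNReal) • Measure.dirac (-1 : ℝ))
    (hs'law : μ.map s' = (1/2 : ENNReal) • Measure.dirac (1 : ℝ)
        + (1/2 : ENNReal) • Measure.dirac (-1 : ℝ))
    (hindep : iIndepFun ![η, s, s'] μ) :
    μ.map (fun ω => s ω * Real.log ((1 - s ω * Real.tanh (η ω / 2)) / 2)) =
      μ.map (fun ω => s ω * Real.log ((1 + s' ω * Real.tanh (η ω / 2)) / 2)) := by
  classical
  have hν : IsProbabilityMeasure (μ.map η) := Measure.isProbabilityMeasure_map hη.aemeasurable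
  set ν : Measure ℝ := μ.map η with hνdef
  have hmeas : ∀ i, Measurable (![η, s, s'] i) := by
    intro i; fin_cases i <;> simpa
  -- the four basic pushforwards
  set P : Measure ℝ := ν.map (fun x => Real.log ((1 - Real.tanh (x / 2)) / 2)) with hP
  set Q : Measure ℝ := ν.map (fun x => Real.log ((1 + Real.tanh (x / 2)) / 2)) with hQ
  set P' : Measure ℝ := ν.map (fun x => -Real.log ((1 - Real.tanh (x / 2)) / 2)) with hP'
  set Q' : Measure ℝ := ν.map (fun x => -Real.log ((1 + Real.tanh (x / 2)) / 2)) with hQ'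
  -- measurability of the basic functions
  have hmt : Measurable (fun x : ℝ => Real.tanh (x / 2)) :=
    aux_meas_tanh.comp (measurable_id.div_const 2)
  have hmp : Measurable (fun x : ℝ => Real.log ((1 - Real.tanh (x / 2)) / 2)) :=
    Real.measurable_log.comp (((measurable_const.sub hmt)).div_const 2)
  -- symmetry: pushforward by g equals pushforward by g ∘ neg
  have hsymm : ∀ g : ℝ → ℝ, Measurable g → ν.map g = ν.map (fun x => g (-x)) := by
    intro g hg
    have hgneg : Measurable fun x : ℝ => g (-x) := hg.comp measurable_neg
    have h1 : ν.map g = μ.map (fun ω => g (η ω)) := by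
      rw [hνdef, Measure.map_map hg hη]; rfl
    have h2 : ν.map (fun x => g (-x)) = μ.map (fun ω => g (-η ω)) := by
      rw [hνdef, Measure.map_map hgneg hη]; rfl
    have h3 : μ.map (fun ω => g (-η ω)) = (μ.map (fun ω => -η ω)).map g := by
      rw [Measure.map_map (f := fun ω => -η ω) hg hη.neg]; rfl
    rw [h1, h2, h3, ← hsym, hνdef, Measure.map_map hg hη]; rfl
  have hPQ : P = Q := by
    rw [hP, hsymm _ hmp, hQ]
    congr 1; funext x; rw [neg_div, Real.tanh_neg]; ring_nf
  have hPQ' : P' = Q' := by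
    rw [hP', hsymm (fun x => -Real.log ((1 - Real.tanh (x / 2)) / 2)) hmp.neg, hQ']
    congr 1; funext x; rw [neg_div, Real.tanh_neg]; ring_nf
  -- joint law of (η, s)
  have hpairm : Measurable (fun ω => (η ω, s ω)) := hη.prodMk hs
  have hmapηs : μ.map (fun ω => (η ω, s ω)) = ν.prod (μ.map s) :=
    (indepFun_iff_map_prod_eq_prod_map_map hη.aemeasurable hs.aemeasurable).mp
      (hindep.indepFun (show (0 : Fin 3) ≠ 1 by decide))
  -- LHS computation
  have hLHS : μ.map (fun ω => s ω * Real.log ((1 - s ω * Real.tanh (η ω / 2)) / 2))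
      = (1/2 : ENNReal) • P + (1/2 : ENNReal) • Q' := by
    set F : ℝ × ℝ → ℝ := fun p => p.2 * Real.log ((1 - p.2 * Real.tanh (p.1 / 2)) / 2) with hF
    have hFm : Measurable F :=
      measurable_snd.mul (Real.measurable_log.comp
        ((measurable_const.sub (measurable_snd.mul (hmt.comp measurable_fst))).div_const 2))
    have h1 : μ.map (fun ω => s ω * Real.log ((1 - s ω * Real.tanh (η ω / 2)) / 2))
        = (μ.map (fun ω => (η ω, s ω))).map F := by
      rw [Measure.map_map hFm hpairm]; rfl
    rw [h1, hmapηs, hslaw, aux_mix _ _ _ _ hFm]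
    have e1 : (fun x : ℝ => F (x, 1)) = fun x => Real.log ((1 - Real.tanh (x / 2)) / 2) := by
      funext x; simp [F]
    have e2 : (fun x : ℝ => F (x, -1)) = fun x => -Real.log ((1 + Real.tanh (x / 2)) / 2) := by
      funext x; simp [F]; try ring_nf
    rw [e1, e2]
  -- RHS computation
  have hRHS : μ.map (fun ω => s ω * Real.log ((1 + s' ω * Real.tanh (η ω / 2)) / 2))
      = (1/2 : ENNReal) • ((1/2 : ENNReal) • Q + (1/2 : ENNReal) • Q')
        + (1/2 : ENNReal) • ((1/2 : ENNReal) • P + (1/2 : ENNReal) • P') := by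
    have hpair : IndepFun (fun ω => (η ω, s ω)) s' μ :=
      hindep.indepFun_prodMk hmeas 0 1 2 (by decide) (by decide)
    have hmap : μ.map (fun ω => ((η ω, s ω), s' ω))
        = (ν.prod (μ.map s)).prod (μ.map s') := by
      rw [← hmapηs]
      exact (indepFun_iff_map_prod_eq_prod_map_map
        hpairm.aemeasurable hs'.aemeasurable).mp hpair
    set G : (ℝ × ℝ) × ℝ → ℝ :=
      fun p => p.1.2 * Real.log ((1 + p.2 * Real.tanh (p.1.1 / 2)) / 2) with hG
    have hGm : Measurable G :=
      (measurable_snd.comp measurable_fst).mul (Real.measurable_log.comp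
        ((measurable_const.add (measurable_snd.mul
          (hmt.comp (measurable_fst.comp measurable_fst)))).div_const 2))
    have h1 : μ.map (fun ω => s ω * Real.log ((1 + s' ω * Real.tanh (η ω / 2)) / 2))
        = (μ.map (fun ω => ((η ω, s ω), s' ω))).map G := by
      rw [Measure.map_map hGm (hpairm.prodMk hs')]; rfl
    rw [h1, hmap, hs'law, aux_mix _ _ _ _ hGm]
    have hGb : ∀ b : ℝ, Measurable fun p : ℝ × ℝ => G (p, b) := fun b =>
      hGm.comp (measurable_prodMk_right)
    rw [hslaw, aux_mix _ _ _ _ (hGb 1), aux_mix _ _ _ _ (hGb (-1))]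
    have e11 : (fun x : ℝ => G ((x, 1), 1))
        = fun x => Real.log ((1 + Real.tanh (x / 2)) / 2) := by funext x; simp [G]
    have e21 : (fun x : ℝ => G ((x, -1), 1))
        = fun x => -Real.log ((1 + Real.tanh (x / 2)) / 2) := by funext x; simp [G]
    have e12 : (fun x : ℝ => G ((x, 1), -1))
        = fun x => Real.log ((1 - Real.tanh (x / 2)) / 2) := by
      funext x; simp [G]; try ring_nf
    have e22 : (fun x : ℝ => G ((x, -1), -1))
        = fun x => -Real.log ((1 - Real.tanh (x / 2)) / 2) := by
      funext x; simp [G]; try ring_nf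
    rw [e11, e21, e12, e22]
  rw [hLHS, hRHS, ← hPQ, hPQ', ← add_smul]
  have h2 : ((1 : ENNReal)/2 + 1/2) = 1 := ENNReal.add_halves 1
  rw [h2, one_smul]
end

section
/- Let 0 < d < 2. Define the operator LL_d on the Wasserstein space W₂(ℝ) of square-integrable probability measures on ℝ by letting LL_d(ρ) be the law of ∑_{i=1}^{D} sᵢ·log((1 + sᵢ'·tanh(ηᵢ/2))/2), where D ~ Poisson(d), the sᵢ, sᵢ' are independent uniform signs, and the ηᵢ are i.i.d. with law ρ, all mutually independent. Then LL_d is a contraction with respect to the Wasserstein-2 metric: W₂(LL_d(ρ), LL_d(ρ'))² ≤ (d/2)·W₂(ρ, ρ')² for all ρ, ρ' ∈ W₂(ℝ). -/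
open MeasureTheory ProbabilityTheory Real
open scoped NNReal ENNReal

/-- `γ` is a coupling of `ρ` and `ρ'`. -/
def IsCoupling (γ : Measure (ℝ × ℝ)) (ρ ρ' : Measure ℝ) : Prop :=
  γ.map Prod.fst = ρ ∧ γ.map Prod.snd = ρ'

/-- Squared Wasserstein-2 distance between two probability measures on `ℝ`. -/
noncomputable def W2sq (ρ ρ' : Measure ℝ) : ℝ≥0∞ :=
  ⨅ (γ : Measure (ℝ × ℝ)) (_ : IsProbabilityMeasure γ) (_ : IsCoupling γ ρ ρ'),
    ∫⁻ p, ENNReal.ofReal ((p.1 - p.2) ^ 2) ∂γ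

/-- Codomain family: one `ℕ`-valued variable (the Poisson count) and, for each `n : ℕ`,
three real variables `ηₙ, sₙ, sₙ'`. -/
abbrev llCod : Unit ⊕ (ℕ × Fin 3) → Type := Sum.elim (fun _ => ℕ) (fun _ => ℝ)

def llMS : ∀ i : Unit ⊕ (ℕ × Fin 3), MeasurableSpace (llCod i)
  | Sum.inl _ => (inferInstance : MeasurableSpace ℕ)
  | Sum.inr _ => (inferInstance : MeasurableSpace ℝ)

def llFam {Ω : Type*} (D : Ω → ℕ) (η s s' : ℕ → Ω → ℝ) :
    ∀ i : Unit ⊕ (ℕ × Fin 3), Ω → llCod i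
  | Sum.inl _ => D
  | Sum.inr (n, j) => if j = 0 then η n else if j = 1 then s n else s' n

/-- The uniform distribution on the two signs `{±1} ⊆ ℝ`. -/
noncomputable def signLaw : Measure ℝ :=
  (1 / 2 : ℝ≥0∞) • Measure.dirac (1 : ℝ) + (1 / 2 : ℝ≥0∞) • Measure.dirac (-1 : ℝ)

/-- The hypothesis that, on a probability space `(Ω, P)`, `D` is Poisson(`d`), the `sₙ, sₙ'`
are uniform signs, the `ηₙ` are i.i.d. with law `ρ`, and all of them are mutually
independent; then `P.map (∑_{i<D} sᵢ · log((1 + sᵢ'·tanh(ηᵢ/2))/2))` realizes `LL_d(ρ)`. -/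
structure IsLLSetup {Ω : Type*} [MeasurableSpace Ω] (P : Measure Ω) (d : ℝ≥0)
    (ρ : Measure ℝ) (D : Ω → ℕ) (η s s' : ℕ → Ω → ℝ) : Prop where
  probMeas : IsProbabilityMeasure P
  measD : Measurable D
  measη : ∀ n, Measurable (η n)
  meass : ∀ n, Measurable (s n)
  meass' : ∀ n, Measurable (s' n)
  lawD : P.map D = (poissonPMF d).toMeasure
  lawη : ∀ n, P.map (η n) = ρ
  laws : ∀ n, P.map (s n) = signLaw
  laws' : ∀ n, P.map (s' n) = signLaw
  indep : iIndepFun (m := llMS) (llFam D η s s') P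


open scoped Nat

namespace LL


noncomputable def h (b x : ℝ) : ℝ := Real.log ((1 + b * Real.tanh (x / 2)) / 2)

lemma continuous_tanh : Continuous Real.tanh := by
  have : Real.tanh = fun x => Real.sinh x / Real.cosh x := funext fun x => Real.tanh_eq_sinh_div_cosh x
  rw [this]
  exact Real.continuous_sinh.div Real.continuous_cosh fun x => (Real.cosh_pos x).ne'

lemma measurable_h : Measurable (fun p : ℝ × ℝ => h p.1 p.2) := by
  unfold h
  exact Real.measurable_log.comp <| ((measurable_const.add (measurable_fst.mul
    ((continuous_tanh.measurable).comp (measurable_snd.div_const 2)))).div_const 2)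

lemma one_add_tanh (x : ℝ) : (1 + Real.tanh (x/2))/2 = (1 + Real.exp (-x))⁻¹ := by
  have h1 : Real.exp (-x) = Real.exp (-(x/2)) * Real.exp (-(x/2)) := by
    rw [← Real.exp_add]; ring_nf
  have hu : Real.exp (x/2) ≠ 0 := (Real.exp_pos _).ne'
  have hc : (0:ℝ) < Real.exp (x/2) + Real.exp (-(x/2)) := by positivity
  have hd : (0:ℝ) < 1 + Real.exp (-(x/2)) * Real.exp (-(x/2)) := by positivity
  rw [Real.tanh_eq_sinh_div_cosh, Real.sinh_eq, Real.cosh_eq, h1, Real.exp_neg]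
  rw [Real.exp_neg] at hc hd
  field_simp
  ring

lemma one_sub_tanh (x : ℝ) : (1 - Real.tanh (x/2))/2 = (1 + Real.exp x)⁻¹ := by
  have h1 : Real.exp x = Real.exp (x/2) * Real.exp (x/2) := by
    rw [← Real.exp_add]; ring_nf
  have hu : Real.exp (x/2) ≠ 0 := (Real.exp_pos _).ne'
  have hc : (0:ℝ) < Real.exp (x/2) + Real.exp (-(x/2)) := by positivity
  have hd : (0:ℝ) < 1 + Real.exp (x/2) * Real.exp (x/2) := by positivity
  rw [Real.tanh_eq_sinh_div_cosh, Real.sinh_eq, Real.cosh_eq, h1]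
  rw [Real.exp_neg] at hc ⊢
  field_simp
  ring

lemma h_one (t : ℝ) : h 1 t = -Real.log (1 + Real.exp (-t)) := by
  rw [h, one_mul, one_add_tanh, Real.log_inv]

lemma h_neg_one (t : ℝ) : h (-1) t = -Real.log (1 + Real.exp t) := by
  rw [h, neg_one_mul, ← sub_eq_add_neg, one_sub_tanh, Real.log_inv]

lemma log_id (t : ℝ) : Real.log (1 + Real.exp t) = t + Real.log (1 + Real.exp (-t)) := by
  have h1 : Real.exp t * (1 + Real.exp (-t)) = 1 + Real.exp t := by
    rw [mul_add, mul_one, ← Real.exp_add]; simp [add_comm]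
  have h2 : (0:ℝ) < 1 + Real.exp (-t) := by positivity
  rw [← h1, Real.log_mul (Real.exp_ne_zero t) h2.ne', Real.log_exp]

lemma key (x y : ℝ) : (h 1 x - h 1 y)^2 + (h (-1) x - h (-1) y)^2 ≤ (x - y)^2 := by
  have hcx := log_id x
  have hcy := log_id y
  rw [h_one, h_one, h_neg_one, h_neg_one, hcx, hcy]
  set a : ℝ := Real.log (1 + Real.exp (-x)) with ha
  set b : ℝ := Real.log (1 + Real.exp (-y)) with hb
  have hmono : ∀ u v : ℝ, u ≤ v →
      Real.log (1 + Real.exp (-v)) ≤ Real.log (1 + Real.exp (-u)) := by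
    intro u v huv
    have : (0:ℝ) < 1 + Real.exp (-v) := by positivity
    exact Real.log_le_log this (by simpa using Real.exp_le_exp.mpr (neg_le_neg huv))
  have hmono2 : ∀ u v : ℝ, u ≤ v →
      Real.log (1 + Real.exp u) ≤ Real.log (1 + Real.exp v) := by
    intro u v huv
    have : (0:ℝ) < 1 + Real.exp u := by positivity
    exact Real.log_le_log this (by simpa using Real.exp_le_exp.mpr huv)
  have hprod : (a - b) * ((a - b) + (x - y)) ≤ 0 := by
    rcases le_total x y with hxy | hxy
    · have h1 : 0 ≤ a - b := by have := hmono x y hxy; rw [← ha, ← hb] at this; linarith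
      have h2 : (a - b) + (x - y) ≤ 0 := by
        have := hmono2 x y hxy
        linarith
      nlinarith
    · have h1 : a - b ≤ 0 := by have := hmono y x hxy; rw [← ha, ← hb] at this; linarith
      have h2 : 0 ≤ (a - b) + (x - y) := by
        have := hmono2 y x hxy
        linarith
      nlinarith
  nlinarith [hprod]

instance : IsProbabilityMeasure signLaw := by
  constructor
  simp [signLaw]
  rw [ENNReal.inv_two_add_inv_two]

lemma lintegral_signLaw (f : ℝ → ℝ≥0∞) (hf : Measurable f) :
    ∫⁻ a, f a ∂signLaw = 2⁻¹ * f 1 + 2⁻¹ * f (-1) := by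
  rw [signLaw, lintegral_add_measure, lintegral_smul_measure, lintegral_smul_measure,
    lintegral_dirac' _ hf, lintegral_dirac' _ hf]
  norm_num

lemma sign_avg (c e : ℝ) : ∫⁻ a, ENNReal.ofReal ((c + a * e)^2) ∂signLaw
    = ENNReal.ofReal (c^2) + ENNReal.ofReal (e^2) := by
  rw [lintegral_signLaw _ (by exact ENNReal.measurable_ofReal.comp (by fun_prop))]
  have h1 : (c + 1 * e)^2 = (c + e)^2 := by ring
  have h2 : (c + (-1) * e)^2 = (c - e)^2 := by ring
  rw [h1, h2, ← mul_add, ← ENNReal.ofReal_add (by positivity) (by positivity)]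
  have h3 : (c + e)^2 + (c - e)^2 = 2 * (c^2 + e^2) := by ring
  rw [h3, ENNReal.ofReal_mul (by norm_num), ← mul_assoc]
  norm_num
  rw [ENNReal.ofReal_add (by positivity) (by positivity),
    ENNReal.inv_mul_cancel (by norm_num) (by norm_num), one_mul]

lemma poisson_sum_real (d : ℝ≥0) :
    HasSum (fun n : ℕ => (n : ℝ) * poissonPMFReal d n) d := by
  have hs : Summable (fun n : ℕ => (d:ℝ)^n / n !) := Real.summable_pow_div_factorial d
  have hexp : Real.exp d = ∑' n : ℕ, (d:ℝ)^n / n ! := by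
    rw [Real.exp_eq_exp_ℝ, NormedSpace.exp_eq_tsum_div]
  set v : ℕ → ℝ := fun n => (n : ℝ) * poissonPMFReal d n with hv
  have hshift : (fun n : ℕ => v (n + 1)) =
      fun n : ℕ => (Real.exp (-(d:ℝ)) * d) * ((d:ℝ)^n / n !) := by
    funext n
    have hne : ((n:ℝ) + 1) ≠ 0 := by positivity
    simp only [hv, poissonPMFReal, Nat.factorial_succ]
    push_cast
    field_simp
    ring
  have hsum1 : Summable (fun n : ℕ => v (n + 1)) := by
    rw [hshift]; exact hs.mul_left _
  have hsummv : Summable v := by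
    rwa [← summable_nat_add_iff 1]
  have hts : ∑' n, v n = d := by
    rw [hsummv.tsum_eq_zero_add]
    have hv0 : v 0 = 0 := by simp [hv]
    rw [hv0, zero_add]
    have : ∑' n : ℕ, v (n + 1) = (Real.exp (-(d:ℝ)) * d) * ∑' n : ℕ, ((d:ℝ)^n / n !) := by
      rw [hshift, tsum_mul_left]
    rw [this, ← hexp, mul_comm (Real.exp _), mul_assoc, ← Real.exp_add]
    simp
  have := hsummv.hasSum
  rwa [hts] at this

lemma poisson_mean (d : ℝ≥0) :
    ∑' n : ℕ, (n : ℝ≥0∞) * poissonPMF d n = (d : ℝ≥0∞) := by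
  have hterm : ∀ n : ℕ, (n : ℝ≥0∞) * poissonPMF d n
      = ENNReal.ofReal ((n : ℝ) * poissonPMFReal d n) := by
    intro n
    rw [show (poissonPMF d) n = ENNReal.ofReal (poissonPMFReal d n) from rfl,
      ENNReal.ofReal_mul (by positivity), ENNReal.ofReal_natCast]
  rw [tsum_congr hterm, ← ENNReal.ofReal_tsum_of_nonneg
    (fun n => by simp only [poissonPMFReal]; positivity) (poisson_sum_real d).summable,
    (poisson_sum_real d).tsum_eq]
  simp

/-- The one-sided step map. -/
noncomputable def e1 : ((ℝ × ℝ) × ℝ) × ℝ → ℝ := fun q => q.1.2 + q.2 * h q.1.1.2 q.1.1.1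

lemma measurable_e1 : Measurable e1 := by
  unfold e1
  exact (measurable_snd.comp measurable_fst).add
    (measurable_snd.mul (measurable_h.comp
      ((measurable_snd.comp (measurable_fst.comp measurable_fst)).prodMk
        (measurable_fst.comp (measurable_fst.comp measurable_fst)))))

noncomputable def step (μ ν : Measure ℝ) : Measure ℝ :=
  (((μ.prod signLaw).prod ν).prod signLaw).map e1

noncomputable def sigma (μ : Measure ℝ) : ℕ → Measure ℝ
  | 0 => Measure.dirac 0
  | n + 1 => step μ (sigma μ n)

noncomputable def e2 : (((ℝ × ℝ) × ℝ) × (ℝ × ℝ)) × ℝ → ℝ × ℝ := fun q =>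
  (q.1.2.1 + q.2 * h q.1.1.2 q.1.1.1.1, q.1.2.2 + q.2 * h q.1.1.2 q.1.1.1.2)

lemma measurable_e2 : Measurable e2 := by
  unfold e2
  apply Measurable.prodMk
  · exact (measurable_fst.comp (measurable_snd.comp measurable_fst)).add
      (measurable_snd.mul (measurable_h.comp
        ((measurable_snd.comp (measurable_fst.comp measurable_fst)).prodMk
          (measurable_fst.comp (measurable_fst.comp (measurable_fst.comp measurable_fst))))))
  · exact (measurable_snd.comp (measurable_snd.comp measurable_fst)).add
      (measurable_snd.mul (measurable_h.comp
        ((measurable_snd.comp (measurable_fst.comp measurable_fst)).prodMk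
          (measurable_snd.comp (measurable_fst.comp (measurable_fst.comp measurable_fst))))))

noncomputable def cstep (γ ν : Measure (ℝ × ℝ)) : Measure (ℝ × ℝ) :=
  (((γ.prod signLaw).prod ν).prod signLaw).map e2

noncomputable def nu (γ : Measure (ℝ × ℝ)) : ℕ → Measure (ℝ × ℝ)
  | 0 => Measure.dirac (0, 0)
  | n + 1 => cstep γ (nu γ n)

lemma sigma_prob (μ : Measure ℝ) [IsProbabilityMeasure μ] (n : ℕ) :
    IsProbabilityMeasure (sigma μ n) := by
  induction n with
  | zero => exact Measure.dirac.isProbabilityMeasure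
  | succ n ih =>
    exact Measure.isProbabilityMeasure_map measurable_e1.aemeasurable

lemma nu_prob (γ : Measure (ℝ × ℝ)) [IsProbabilityMeasure γ] (n : ℕ) :
    IsProbabilityMeasure (nu γ n) := by
  induction n with
  | zero => exact Measure.dirac.isProbabilityMeasure
  | succ n ih =>
    exact Measure.isProbabilityMeasure_map measurable_e2.aemeasurable

lemma nu_map_fst (γ : Measure (ℝ × ℝ)) [IsProbabilityMeasure γ] (n : ℕ) :
    (nu γ n).map Prod.fst = sigma (γ.map Prod.fst) n := by
  haveI : IsProbabilityMeasure (γ.map Prod.fst) :=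
    Measure.isProbabilityMeasure_map measurable_fst.aemeasurable
  induction n with
  | zero => simp [nu, sigma, Measure.map_dirac' measurable_fst]
  | succ n ih =>
    haveI := nu_prob γ n
    have hθ1 : Measurable (Prod.map (Prod.map (Prod.fst : ℝ × ℝ → ℝ) (id : ℝ → ℝ))
        (Prod.fst : ℝ × ℝ → ℝ)) := ((measurable_fst.prodMap measurable_id).prodMap measurable_fst)
    have hcomp : (Prod.fst : ℝ × ℝ → ℝ) ∘ e2 = e1 ∘ (Prod.map (Prod.map
        (Prod.map (Prod.fst : ℝ × ℝ → ℝ) (id : ℝ → ℝ)) (Prod.fst : ℝ × ℝ → ℝ)) (id : ℝ → ℝ)) := by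
      funext q
      rcases q with ⟨⟨⟨⟨⟨x, y⟩, b⟩, ⟨u, v⟩⟩, a⟩⟩
      rfl
    rw [show nu γ (n+1) = cstep γ (nu γ n) from rfl, cstep,
      Measure.map_map measurable_fst measurable_e2, hcomp,
      ← Measure.map_map measurable_e1 (hθ1.prodMap measurable_id)]
    congr 1
    rw [← Measure.map_prod_map _ _ hθ1 measurable_id,
      ← Measure.map_prod_map _ _ (measurable_fst.prodMap measurable_id) measurable_fst,
      ← Measure.map_prod_map _ _ measurable_fst measurable_id]
    rw [ih, Measure.map_id]

lemma nu_map_snd (γ : Measure (ℝ × ℝ)) [IsProbabilityMeasure γ] (n : ℕ) :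
    (nu γ n).map Prod.snd = sigma (γ.map Prod.snd) n := by
  haveI : IsProbabilityMeasure (γ.map Prod.snd) :=
    Measure.isProbabilityMeasure_map measurable_snd.aemeasurable
  induction n with
  | zero => simp [nu, sigma, Measure.map_dirac' measurable_snd]
  | succ n ih =>
    haveI := nu_prob γ n
    have hθ1 : Measurable (Prod.map (Prod.map (Prod.snd : ℝ × ℝ → ℝ) (id : ℝ → ℝ))
        (Prod.snd : ℝ × ℝ → ℝ)) := ((measurable_snd.prodMap measurable_id).prodMap measurable_snd)
    have hcomp : (Prod.snd : ℝ × ℝ → ℝ) ∘ e2 = e1 ∘ (Prod.map (Prod.map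
        (Prod.map (Prod.snd : ℝ × ℝ → ℝ) (id : ℝ → ℝ)) (Prod.snd : ℝ × ℝ → ℝ)) (id : ℝ → ℝ)) := by
      funext q
      rcases q with ⟨⟨⟨⟨⟨x, y⟩, b⟩, ⟨u, v⟩⟩, a⟩⟩
      rfl
    rw [show nu γ (n+1) = cstep γ (nu γ n) from rfl, cstep,
      Measure.map_map measurable_snd measurable_e2, hcomp,
      ← Measure.map_map measurable_e1 (hθ1.prodMap measurable_id)]
    congr 1
    rw [← Measure.map_prod_map _ _ hθ1 measurable_id,
      ← Measure.map_prod_map _ _ (measurable_snd.prodMap measurable_id) measurable_snd,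
      ← Measure.map_prod_map _ _ measurable_snd measurable_id]
    rw [ih, Measure.map_id]

noncomputable def cost (ν : Measure (ℝ × ℝ)) : ℝ≥0∞ :=
  ∫⁻ p, ENNReal.ofReal ((p.1 - p.2)^2) ∂ν

lemma measurable_costFn : Measurable (fun p : ℝ × ℝ => ENNReal.ofReal ((p.1 - p.2)^2)) :=
  ENNReal.measurable_ofReal.comp (((measurable_fst.sub measurable_snd).pow_const 2))

lemma nu_cost (γ : Measure (ℝ × ℝ)) [IsProbabilityMeasure γ] (n : ℕ) :
    cost (nu γ n) ≤ n * (2⁻¹ * cost γ) := by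
  induction n with
  | zero =>
    have : cost (nu γ 0) = 0 := by
      rw [show nu γ 0 = Measure.dirac (0,0) from rfl, cost, lintegral_dirac' _ measurable_costFn]
      simp
    simp [this]
  | succ n ih =>
    haveI := nu_prob γ n
    set Q : Measure (((ℝ × ℝ) × ℝ) × (ℝ × ℝ)) := (γ.prod signLaw).prod (nu γ n) with hQ
    have hstep : cost (nu γ (n+1))
        = ∫⁻ q, (ENNReal.ofReal ((q.2.1 - q.2.2)^2)
          + ENNReal.ofReal ((h q.1.2 q.1.1.1 - h q.1.2 q.1.1.2)^2)) ∂Q := by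
      have hae : AEMeasurable (fun a : ((((ℝ × ℝ) × ℝ) × (ℝ × ℝ)) × ℝ) =>
          ENNReal.ofReal (((e2 a).1 - (e2 a).2)^2)) (Q.prod signLaw) :=
        (measurable_costFn.comp measurable_e2).aemeasurable
      rw [show nu γ (n+1) = cstep γ (nu γ n) from rfl, cstep, cost,
        lintegral_map measurable_costFn measurable_e2, ← hQ,
        lintegral_prod _ hae]
      refine lintegral_congr fun q => ?_
      have hpt : ∀ a : ℝ, ENNReal.ofReal ((((e2 (q, a)).1 - (e2 (q, a)).2))^2)
          = ENNReal.ofReal (((q.2.1 - q.2.2)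
            + a * (h q.1.2 q.1.1.1 - h q.1.2 q.1.1.2))^2) := by
        intro a
        exact congrArg ENNReal.ofReal (by simp only [e2]; ring)
      calc ∫⁻ a, ENNReal.ofReal (((e2 (q, a)).1 - (e2 (q, a)).2)^2) ∂signLaw
          = ∫⁻ a, ENNReal.ofReal (((q.2.1 - q.2.2)
              + a * (h q.1.2 q.1.1.1 - h q.1.2 q.1.1.2))^2) ∂signLaw :=
            lintegral_congr hpt
        _ = _ := sign_avg _ _
    have hmeasA : Measurable (fun q : ((ℝ × ℝ) × ℝ) × (ℝ × ℝ) =>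
        ENNReal.ofReal ((q.2.1 - q.2.2)^2)) := measurable_costFn.comp measurable_snd
    have hmeasB : Measurable (fun p : (ℝ × ℝ) × ℝ =>
        ENNReal.ofReal ((h p.2 p.1.1 - h p.2 p.1.2)^2)) := by
      apply ENNReal.measurable_ofReal.comp
      apply Measurable.pow_const
      exact (measurable_h.comp (measurable_snd.prodMk
          (measurable_fst.comp measurable_fst))).sub
        (measurable_h.comp (measurable_snd.prodMk (measurable_snd.comp measurable_fst)))
    have h1 : ∫⁻ q, ENNReal.ofReal ((q.2.1 - q.2.2)^2) ∂Q = cost (nu γ n) := by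
      rw [hQ, ← lintegral_map measurable_costFn measurable_snd, Measure.map_snd_prod,
        measure_univ, one_smul, cost]
    have h2 : ∫⁻ q, ENNReal.ofReal ((h q.1.2 q.1.1.1 - h q.1.2 q.1.1.2)^2) ∂Q
        ≤ 2⁻¹ * cost γ := by
      rw [hQ, ← lintegral_map hmeasB measurable_fst, Measure.map_fst_prod,
        measure_univ, one_smul, lintegral_prod _ hmeasB.aemeasurable]
      have hin2 : ∀ xy : ℝ × ℝ, ∫⁻ b, ENNReal.ofReal ((h b xy.1 - h b xy.2)^2) ∂signLaw
          ≤ 2⁻¹ * ENNReal.ofReal ((xy.1 - xy.2)^2) := by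
        intro xy
        have hm : Measurable (fun b => ENNReal.ofReal ((h b xy.1 - h b xy.2)^2)) := by
          apply ENNReal.measurable_ofReal.comp
          apply Measurable.pow_const
          exact (measurable_h.comp (measurable_id.prodMk measurable_const)).sub
            (measurable_h.comp (measurable_id.prodMk measurable_const))
        rw [lintegral_signLaw _ hm, ← mul_add,
          ← ENNReal.ofReal_add (by positivity) (by positivity)]
        exact mul_le_mul_right (ENNReal.ofReal_le_ofReal (key xy.1 xy.2)) _
      calc ∫⁻ xy, (∫⁻ b, ENNReal.ofReal ((h b xy.1 - h b xy.2)^2) ∂signLaw) ∂γ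
          ≤ ∫⁻ xy, 2⁻¹ * ENNReal.ofReal ((xy.1 - xy.2)^2) ∂γ := lintegral_mono hin2
        _ = 2⁻¹ * cost γ := by rw [lintegral_const_mul _ measurable_costFn, cost]
    calc cost (nu γ (n+1)) = ∫⁻ q, ENNReal.ofReal ((q.2.1 - q.2.2)^2) ∂Q
          + ∫⁻ q, ENNReal.ofReal ((h q.1.2 q.1.1.1 - h q.1.2 q.1.1.2)^2) ∂Q := by
            rw [hstep, lintegral_add_left hmeasA]
      _ ≤ n * (2⁻¹ * cost γ) + 2⁻¹ * cost γ := by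
            rw [h1]; exact add_le_add ih h2
      _ = (n + 1 : ℕ) * (2⁻¹ * cost γ) := by
            push_cast
            rw [add_mul, one_mul]

instance instLLms (i : Unit ⊕ (ℕ × Fin 3)) : MeasurableSpace (llCod i) := llMS i

section Pside

variable {Ω : Type*} [MeasurableSpace Ω] {P : Measure Ω} {d : ℝ≥0} {ρ : Measure ℝ}
  {D : Ω → ℕ} {η s s' : ℕ → Ω → ℝ}

lemma llFam_inr0 (n : ℕ) : llFam D η s s' (Sum.inr (n, 0)) = η n := rfl
lemma llFam_inr1 (n : ℕ) : llFam D η s s' (Sum.inr (n, 1)) = s n := rfl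
lemma llFam_inr2 (n : ℕ) : llFam D η s s' (Sum.inr (n, 2)) = s' n := rfl

lemma measurable_llFam (hset : IsLLSetup P d ρ D η s s') :
    ∀ i, Measurable (llFam D η s s' i) := by
  rintro (u | ⟨n, j⟩)
  · exact hset.measD
  · fin_cases j
    · exact hset.measη n
    · exact hset.meass n
    · exact hset.meass' n

/-- partial sums -/
noncomputable def gg (s s' η : ℕ → Ω → ℝ) (n : ℕ) : Ω → ℝ :=
  fun ω => ∑ i ∈ Finset.range n, s i ω * h (s' i ω) (η i ω)

lemma measurable_gg (hset : IsLLSetup P d ρ D η s s') (n : ℕ) :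
    Measurable (gg s s' η n) := by
  apply Finset.measurable_sum
  intro i _
  exact (hset.meass i).mul (measurable_h.comp ((hset.meass' i).prodMk (hset.measη i)))

/-- generic independence helper -/
lemma indep_comp (hind : iIndepFun (m := llMS) (llFam D η s s') P)
    (hmeas : ∀ i, Measurable (llFam D η s s' i))
    (S T : Finset (Unit ⊕ ℕ × Fin 3)) (hST : Disjoint S T)
    {α β : Type*} [MeasurableSpace α] [MeasurableSpace β]
    {f2 : (∀ i : S, llCod i) → α} {g2 : (∀ i : T, llCod i) → β}
    (hf2 : Measurable f2) (hg2 : Measurable g2) :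
    IndepFun (fun ω => f2 (fun i => llFam D η s s' i ω))
      (fun ω => g2 (fun i => llFam D η s s' i ω)) P :=
  (hind.indepFun_finset S T hST hmeas).comp hf2 hg2

/-- coordinate accessor -/
def coordR {T : Finset (Unit ⊕ ℕ × Fin 3)} (k : ℕ) (j : Fin 3) (hm : Sum.inr (k, j) ∈ T)
    (v : ∀ i : T, llCod i) : ℝ := v ⟨Sum.inr (k, j), hm⟩

lemma measurable_coordR {T : Finset (Unit ⊕ ℕ × Fin 3)} (k : ℕ) (j : Fin 3)
    (hm : Sum.inr (k, j) ∈ T) : Measurable (coordR k j hm) :=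
  measurable_pi_apply _

lemma coordR_llFam {T : Finset (Unit ⊕ ℕ × Fin 3)} (k : ℕ) (j : Fin 3)
    (hm : Sum.inr (k, j) ∈ T) (ω : Ω) :
    coordR k j hm (fun i => llFam D η s s' i ω) = llFam D η s s' (Sum.inr (k, j)) ω := rfl

/-- the summation functional on a finite sub-family -/
noncomputable def sumF (n : ℕ) (T : Finset (Unit ⊕ ℕ × Fin 3))
    (hT : ∀ k, k < n → ∀ j : Fin 3, Sum.inr (k, j) ∈ T) :
    (∀ i : T, llCod i) → ℝ :=
  fun v => ∑ i ∈ (Finset.range n).attach,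
    coordR i.1 1 (hT i.1 (Finset.mem_range.mp i.2) 1) v *
      h (coordR i.1 2 (hT i.1 (Finset.mem_range.mp i.2) 2) v)
        (coordR i.1 0 (hT i.1 (Finset.mem_range.mp i.2) 0) v)

lemma measurable_sumF (n : ℕ) (T : Finset (Unit ⊕ ℕ × Fin 3))
    (hT : ∀ k, k < n → ∀ j : Fin 3, Sum.inr (k, j) ∈ T) :
    Measurable (sumF n T hT) := by
  apply Finset.measurable_sum
  intro i _
  exact (measurable_coordR _ _ _).mul
    (measurable_h.comp ((measurable_coordR _ _ _).prodMk (measurable_coordR _ _ _)))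

lemma comp_sumF (n : ℕ) (T : Finset (Unit ⊕ ℕ × Fin 3))
    (hT : ∀ k, k < n → ∀ j : Fin 3, Sum.inr (k, j) ∈ T) :
    (fun ω => sumF n T hT (fun i => llFam D η s s' i ω)) = gg s s' η n := by
  funext ω
  simp only [sumF, coordR_llFam, llFam_inr0, llFam_inr1, llFam_inr2, gg]
  exact Finset.sum_attach (Finset.range n) (fun k => s k ω * h (s' k ω) (η k ω))

/-- index set of the first `n` triples -/
def Tn (n : ℕ) : Finset (Unit ⊕ ℕ × Fin 3) :=
  ((Finset.range n) ×ˢ (Finset.univ : Finset (Fin 3))).image Sum.inr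

lemma mem_Tn (n : ℕ) : ∀ k, k < n → ∀ j : Fin 3, Sum.inr (k, j) ∈ Tn n := by
  intro k hk j
  exact Finset.mem_image_of_mem _ (Finset.mem_product.mpr ⟨Finset.mem_range.mpr hk, Finset.mem_univ _⟩)

lemma not_mem_Tn (n : ℕ) (j : Fin 3) : Sum.inr (n, j) ∉ Tn n := by
  simp only [Tn, Finset.mem_image, Finset.mem_product, Finset.mem_range, Finset.mem_univ]
  rintro ⟨⟨a, j'⟩, ⟨ha, -⟩, hx⟩
  simp only [Sum.inr.injEq, Prod.mk.injEq] at hx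
  omega

lemma tau_zero (hset : IsLLSetup P d ρ D η s s') :
    P.map (gg s s' η 0) = Measure.dirac 0 := by
  haveI := hset.probMeas
  have h0 : gg s s' η 0 = fun _ => (0:ℝ) := funext fun ω => by simp [gg]
  rw [h0, Measure.map_const, measure_univ, one_smul]

lemma tau_succ (hset : IsLLSetup P d ρ D η s s') (n : ℕ) :
    P.map (gg s s' η (n+1)) = step ρ (P.map (gg s s' η n)) := by
  haveI := hset.probMeas
  haveI : IsProbabilityMeasure (P.map (gg s s' η n)) :=
    Measure.isProbabilityMeasure_map (measurable_gg hset n).aemeasurable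
  have hmeas := measurable_llFam hset
  have hi1 : IndepFun (η n) (s' n) P :=
    hset.indep.indepFun (i := Sum.inr (n,0)) (j := Sum.inr (n,2)) (by simp)
  have hA : P.map (fun ω => (η n ω, s' n ω)) = ρ.prod signLaw := by
    rw [← hset.lawη n, ← hset.laws' n]
    exact (indepFun_iff_map_prod_eq_prod_map_map (hset.measη n).aemeasurable
      (hset.meass' n).aemeasurable).mp hi1
  classical
  set S : Finset (Unit ⊕ ℕ × Fin 3) := {Sum.inr (n,0), Sum.inr (n,2)} with hS
  have hS0 : Sum.inr (n, (0:Fin 3)) ∈ S := by simp [hS]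
  have hS2 : Sum.inr (n, (2:Fin 3)) ∈ S := by simp [hS]
  have hST : Disjoint S (Tn n) := by
    rw [Finset.disjoint_left]
    intro x hx hxT
    rcases Finset.mem_insert.mp hx with rfl | hx'
    · exact not_mem_Tn n 0 hxT
    · rw [Finset.mem_singleton] at hx'
      subst hx'
      exact not_mem_Tn n 2 hxT
  have hpairm : Measurable (fun v : (∀ i : S, llCod i) =>
      (coordR n 0 hS0 v, coordR n 2 hS2 v)) :=
    (measurable_coordR _ _ _).prodMk (measurable_coordR _ _ _)
  have hi2 : IndepFun (fun ω => (η n ω, s' n ω)) (gg s s' η n) P := by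
    have hcomp := indep_comp hset.indep hmeas S (Tn n) hST hpairm
      (measurable_sumF n (Tn n) (mem_Tn n))
    rw [comp_sumF] at hcomp
    exact hcomp
  have hB : P.map (fun ω => ((η n ω, s' n ω), gg s s' η n ω))
      = (ρ.prod signLaw).prod (P.map (gg s s' η n)) := by
    rw [← hA]
    exact (indepFun_iff_map_prod_eq_prod_map_map
      (((hset.measη n).prodMk (hset.meass' n))).aemeasurable
      (measurable_gg hset n).aemeasurable).mp hi2
  set S' : Finset (Unit ⊕ ℕ × Fin 3) :=
    insert (Sum.inr (n,0)) (insert (Sum.inr (n,2)) (Tn n)) with hS'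
  have hmem0 : Sum.inr (n,(0:Fin 3)) ∈ S' := Finset.mem_insert_self _ _
  have hmem2 : Sum.inr (n,(2:Fin 3)) ∈ S' :=
    Finset.mem_insert_of_mem (Finset.mem_insert_self _ _)
  have hmemT : ∀ k, k < n → ∀ j : Fin 3, Sum.inr (k,j) ∈ S' := fun k hk j =>
    Finset.mem_insert_of_mem (Finset.mem_insert_of_mem (mem_Tn n k hk j))
  have hS'T' : Disjoint S' ({Sum.inr (n,1)} : Finset (Unit ⊕ ℕ × Fin 3)) := by
    rw [Finset.disjoint_right]
    intro x hx
    rw [Finset.mem_singleton] at hx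
    subst hx
    intro hx
    rcases Finset.mem_insert.mp hx with h' | h'
    · simp at h'
    · rcases Finset.mem_insert.mp h' with h'' | h''
      · simp at h''
      · exact not_mem_Tn n 1 h''
  have hbigm : Measurable (fun v : (∀ i : S', llCod i) =>
      ((coordR n 0 hmem0 v, coordR n 2 hmem2 v), sumF n S' hmemT v)) :=
    ((measurable_coordR _ _ _).prodMk (measurable_coordR _ _ _)).prodMk
      (measurable_sumF _ _ _)
  have hsingm : Measurable
      (fun v : (∀ i : ({Sum.inr (n,1)} : Finset (Unit ⊕ ℕ × Fin 3)), llCod i) =>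
        coordR n 1 (Finset.mem_singleton_self _) v) := measurable_coordR _ _ _
  have hi3 : IndepFun (fun ω => ((η n ω, s' n ω), gg s s' η n ω)) (s n) P := by
    have hcomp := indep_comp hset.indep hmeas S' _ hS'T' hbigm hsingm
    have e2' : (fun ω => ((coordR n 0 hmem0 (fun i => llFam D η s s' i ω),
        coordR n 2 hmem2 (fun i => llFam D η s s' i ω)),
        sumF n S' hmemT (fun i => llFam D η s s' i ω)))
        = fun ω => ((η n ω, s' n ω), gg s s' η n ω) := by
      funext ω
      exact congrArg (fun z => ((η n ω, s' n ω), z))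
        (congrFun (comp_sumF (D := D) n S' hmemT) ω)
    rw [e2'] at hcomp
    exact hcomp
  have hXm : Measurable (fun ω => (((η n ω, s' n ω), gg s s' η n ω), s n ω)) :=
    (((hset.measη n).prodMk (hset.meass' n)).prodMk (measurable_gg hset n)).prodMk
      (hset.meass n)
  have hC : P.map (fun ω => (((η n ω, s' n ω), gg s s' η n ω), s n ω))
      = ((ρ.prod signLaw).prod (P.map (gg s s' η n))).prod signLaw := by
    rw [← hB, ← hset.laws n]
    exact (indepFun_iff_map_prod_eq_prod_map_map
      ((((hset.measη n).prodMk (hset.meass' n)).prodMk (measurable_gg hset n))).aemeasurable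
      (hset.meass n).aemeasurable).mp hi3
  have hgsucc : gg s s' η (n+1)
      = e1 ∘ (fun ω => (((η n ω, s' n ω), gg s s' η n ω), s n ω)) := by
    funext ω
    simp only [gg, Function.comp, e1, Finset.sum_range_succ]
  rw [hgsucc, ← Measure.map_map measurable_e1 hXm, hC]
  rfl

lemma tau_eq (hset : IsLLSetup P d ρ D η s s') (n : ℕ) :
    P.map (gg s s' η n) = sigma ρ n := by
  induction n with
  | zero => rw [tau_zero hset]; rfl
  | succ n ih => rw [tau_succ hset n, ih]; rfl

lemma law_eq (hset : IsLLSetup P d ρ D η s s') :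
    P.map (fun ω => ∑ i ∈ Finset.range (D ω), s i ω * h (s' i ω) (η i ω))
      = Measure.sum (fun n => poissonPMF d n • sigma ρ n) := by
  haveI := hset.probMeas
  have hmeas := measurable_llFam hset
  have hpre : ∀ A : Set ℝ,
      (fun ω => ∑ i ∈ Finset.range (D ω), s i ω * h (s' i ω) (η i ω)) ⁻¹' A
        = ⋃ n, (D ⁻¹' {n} ∩ gg s s' η n ⁻¹' A) := by
    intro A
    ext ω
    simp only [Set.mem_preimage, Set.mem_iUnion, Set.mem_inter_iff, Set.mem_singleton_iff]
    constructor
    · intro hω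
      exact ⟨D ω, rfl, hω⟩
    · rintro ⟨n, hn, hω⟩
      subst hn
      exact hω
  have hmf : Measurable (fun ω => ∑ i ∈ Finset.range (D ω), s i ω * h (s' i ω) (η i ω)) := by
    intro A hA
    rw [hpre]
    exact MeasurableSet.iUnion fun n =>
      (hset.measD (measurableSet_singleton n)).inter (measurable_gg hset n hA)
  have hiDg : ∀ n, IndepFun D (gg s s' η n) P := by
    intro n
    have hd : Disjoint ({Sum.inl ()} : Finset (Unit ⊕ ℕ × Fin 3)) (Tn n) := by
      rw [Finset.disjoint_left]
      intro x hx hxT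
      rw [Finset.mem_singleton] at hx
      subst hx
      simp [Tn] at hxT
    have hDm : Measurable (fun v : (∀ i : ({Sum.inl ()} : Finset (Unit ⊕ ℕ × Fin 3)), llCod i) =>
        (v ⟨Sum.inl (), Finset.mem_singleton_self _⟩ : ℕ)) := measurable_pi_apply _
    have hcomp := indep_comp hset.indep hmeas _ _ hd hDm (measurable_sumF n (Tn n) (mem_Tn n))
    rw [comp_sumF] at hcomp
    exact hcomp
  ext A hA
  rw [Measure.map_apply hmf hA, hpre, measure_iUnion, Measure.sum_apply _ hA]
  · refine tsum_congr fun n => ?_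
    rw [Measure.smul_apply, smul_eq_mul,
      (indepFun_iff_measure_inter_preimage_eq_mul.mp (hiDg n)) {n} A
        (measurableSet_singleton n) hA]
    congr 1
    · rw [← Measure.map_apply hset.measD (measurableSet_singleton n), hset.lawD,
        PMF.toMeasure_apply_singleton _ _ (measurableSet_singleton n)]
    · rw [← Measure.map_apply (measurable_gg hset n) hA, tau_eq hset n]
  · intro m n hmn
    apply Set.disjoint_left.mpr
    rintro ω ⟨hm, -⟩ ⟨hn, -⟩
    simp only [Set.mem_preimage, Set.mem_singleton_iff] at hm hn
    exact hmn (hm ▸ hn ▸ rfl)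
  · intro n
    exact (hset.measD (measurableSet_singleton n)).inter (measurable_gg hset n hA)

end Pside

noncomputable def Gamma (d : ℝ≥0) (γ : Measure (ℝ × ℝ)) : Measure (ℝ × ℝ) :=
  Measure.sum (fun n => poissonPMF d n • nu γ n)

lemma Gamma_prob (d : ℝ≥0) (γ : Measure (ℝ × ℝ)) [IsProbabilityMeasure γ] :
    IsProbabilityMeasure (Gamma d γ) := by
  constructor
  rw [Gamma, Measure.sum_apply _ MeasurableSet.univ]
  have hterm : ∀ n, (poissonPMF d n • nu γ n) Set.univ = poissonPMF d n := by
    intro n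
    haveI := nu_prob γ n
    rw [Measure.smul_apply, measure_univ, smul_eq_mul, mul_one]
  rw [tsum_congr hterm, (poissonPMF d).tsum_coe]

lemma Gamma_map_fst (d : ℝ≥0) (γ : Measure (ℝ × ℝ)) [IsProbabilityMeasure γ] :
    (Gamma d γ).map Prod.fst
      = Measure.sum (fun n => poissonPMF d n • sigma (γ.map Prod.fst) n) := by
  ext A hA
  rw [Measure.map_apply measurable_fst hA, Gamma, Measure.sum_apply _ (measurable_fst hA),
    Measure.sum_apply _ hA]
  refine tsum_congr fun n => ?_
  rw [Measure.smul_apply, Measure.smul_apply, ← Measure.map_apply measurable_fst hA,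
    nu_map_fst γ n]

lemma Gamma_map_snd (d : ℝ≥0) (γ : Measure (ℝ × ℝ)) [IsProbabilityMeasure γ] :
    (Gamma d γ).map Prod.snd
      = Measure.sum (fun n => poissonPMF d n • sigma (γ.map Prod.snd) n) := by
  ext A hA
  rw [Measure.map_apply measurable_snd hA, Gamma, Measure.sum_apply _ (measurable_snd hA),
    Measure.sum_apply _ hA]
  refine tsum_congr fun n => ?_
  rw [Measure.smul_apply, Measure.smul_apply, ← Measure.map_apply measurable_snd hA,
    nu_map_snd γ n]

lemma Gamma_cost (d : ℝ≥0) (γ : Measure (ℝ × ℝ)) [IsProbabilityMeasure γ] :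
    (∫⁻ p, ENNReal.ofReal ((p.1 - p.2)^2) ∂(Gamma d γ))
      ≤ (d : ℝ≥0∞) * (2⁻¹ * cost γ) := by
  rw [Gamma, lintegral_sum_measure]
  have h1 : ∀ n : ℕ, ∫⁻ p, ENNReal.ofReal ((p.1 - p.2)^2) ∂(poissonPMF d n • nu γ n)
      = poissonPMF d n * cost (nu γ n) := by
    intro n
    rw [lintegral_smul_measure]
    rfl
  calc ∑' n, ∫⁻ p, ENNReal.ofReal ((p.1 - p.2)^2) ∂(poissonPMF d n • nu γ n)
      = ∑' n, poissonPMF d n * cost (nu γ n) := tsum_congr h1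
    _ ≤ ∑' n : ℕ, poissonPMF d n * ((n : ℝ≥0∞) * (2⁻¹ * cost γ)) :=
        ENNReal.tsum_le_tsum fun n => mul_le_mul_right (nu_cost γ n) _
    _ = ∑' n : ℕ, ((n : ℝ≥0∞) * poissonPMF d n) * (2⁻¹ * cost γ) := by
        refine tsum_congr fun n => by ring
    _ = (∑' n : ℕ, (n : ℝ≥0∞) * poissonPMF d n) * (2⁻¹ * cost γ) := ENNReal.tsum_mul_right
    _ = (d : ℝ≥0∞) * (2⁻¹ * cost γ) := by rw [poisson_mean]


end LL

/-- For `0 < d < 2`, the operator `LL_d` is a contraction on the Wasserstein space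
`W₂(ℝ)`: `W₂(LL_d ρ, LL_d ρ')² ≤ (d/2)·W₂(ρ, ρ')²`. -/
theorem stmt_8 (d : ℝ≥0) (hd0 : 0 < d) (hd2 : (d : ℝ) < 2)
    (ρ ρ' : Measure ℝ) [IsProbabilityMeasure ρ] [IsProbabilityMeasure ρ']
    (hρ : ∫⁻ x, ENNReal.ofReal (x ^ 2) ∂ρ < ∞)
    (hρ' : ∫⁻ x, ENNReal.ofReal (x ^ 2) ∂ρ' < ∞)
    {Ω Ω' : Type*} [MeasurableSpace Ω] [MeasurableSpace Ω']
    (P : Measure Ω) (P' : Measure Ω')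
    (D : Ω → ℕ) (η s s' : ℕ → Ω → ℝ) (D' : Ω' → ℕ) (η' t t' : ℕ → Ω' → ℝ)
    (hset : IsLLSetup P d ρ D η s s') (hset' : IsLLSetup P' d ρ' D' η' t t') :
    W2sq
      (P.map (fun ω => ∑ i ∈ Finset.range (D ω),
        s i ω * Real.log ((1 + s' i ω * Real.tanh (η i ω / 2)) / 2)))
      (P'.map (fun ω => ∑ i ∈ Finset.range (D' ω),
        t i ω * Real.log ((1 + t' i ω * Real.tanh (η' i ω / 2)) / 2))) ≤
      ((d : ℝ≥0∞) / 2) * W2sq ρ ρ' := by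
  haveI := hset.probMeas
  haveI := hset'.probMeas
  rw [show (P.map (fun ω => ∑ i ∈ Finset.range (D ω),
        s i ω * Real.log ((1 + s' i ω * Real.tanh (η i ω / 2)) / 2)))
      = Measure.sum (fun n => poissonPMF d n • LL.sigma ρ n) from LL.law_eq hset,
    show (P'.map (fun ω => ∑ i ∈ Finset.range (D' ω),
        t i ω * Real.log ((1 + t' i ω * Real.tanh (η' i ω / 2)) / 2)))
      = Measure.sum (fun n => poissonPMF d n • LL.sigma ρ' n) from LL.law_eq hset']
  set M := Measure.sum (fun n => poissonPMF d n • LL.sigma ρ n) with hM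
  set M' := Measure.sum (fun n => poissonPMF d n • LL.sigma ρ' n) with hM'
  set c : ℝ≥0∞ := (d : ℝ≥0∞) / 2 with hc
  have hd0' : (d : ℝ≥0∞) ≠ 0 := by
    simp only [ne_eq, ENNReal.coe_eq_zero]
    exact hd0.ne'
  have hc0 : c ≠ 0 := (ENNReal.div_pos hd0' (by norm_num)).ne'
  have hcT : c ≠ ⊤ := by
    rw [hc]
    exact (ENNReal.div_lt_top ENNReal.coe_ne_top (by norm_num)).ne
  have main : ∀ γ : Measure (ℝ × ℝ), IsProbabilityMeasure γ → IsCoupling γ ρ ρ' →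
      W2sq M M' ≤ c * ∫⁻ p, ENNReal.ofReal ((p.1 - p.2)^2) ∂γ := by
    intro γ hγp hγc
    haveI := hγp
    haveI := LL.Gamma_prob d γ
    have hcoup : IsCoupling (LL.Gamma d γ) M M' := by
      constructor
      · rw [LL.Gamma_map_fst d γ, hγc.1]
      · rw [LL.Gamma_map_snd d γ, hγc.2]
    have hle : W2sq M M'
        ≤ ∫⁻ p, ENNReal.ofReal ((p.1 - p.2)^2) ∂(LL.Gamma d γ) := by
      apply iInf_le_of_le (LL.Gamma d γ)
      apply iInf_le_of_le (LL.Gamma_prob d γ)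
      exact iInf_le _ hcoup
    refine hle.trans ((LL.Gamma_cost d γ).trans (le_of_eq ?_))
    rw [hc, ENNReal.div_eq_inv_mul, LL.cost]
    ring
  by_cases hW : W2sq ρ ρ' = ⊤
  · rw [hW, ENNReal.mul_top hc0]
    exact le_top
  · refine ENNReal.le_of_forall_pos_le_add fun ε hε hlt => ?_
    have hδ : ((ε : ℝ≥0∞) / c) ≠ 0 :=
      (ENNReal.div_pos (by exact_mod_cast hε.ne') hcT).ne'
    have hlt2 : W2sq ρ ρ' < W2sq ρ ρ' + (ε : ℝ≥0∞) / c := ENNReal.lt_add_right hW hδ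
    obtain ⟨γ, hγ⟩ := iInf_lt_iff.mp hlt2
    obtain ⟨hγp, hγ2⟩ := iInf_lt_iff.mp hγ
    obtain ⟨hγc, hcost⟩ := iInf_lt_iff.mp hγ2
    calc W2sq M M' ≤ c * ∫⁻ p, ENNReal.ofReal ((p.1 - p.2)^2) ∂γ := main γ hγp hγc
      _ ≤ c * (W2sq ρ ρ' + (ε : ℝ≥0∞) / c) := mul_le_mul_right hcost.le _
      _ = c * W2sq ρ ρ' + c * ((ε : ℝ≥0∞) / c) := mul_add _ _ _
      _ ≤ c * W2sq ρ ρ' + ε := add_le_add_right ENNReal.mul_div_le _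
end

section
/- Let Φ be a 2-SAT formula (a finite set of clauses, each a disjunction of two literals over variables x₁,...,xₙ), let Y be a set of variables and χ : Y → {±1} an assignment. Run Unit Clause Propagation from χ: iteratively, whenever some clause has exactly one of its variables assigned a value that fails to satisfy it, assign the other variable the value satisfying the clause. Let I_χ be the set of all variables assigned a value upon termination (including Y) if no contradiction (a clause with both variables assigned failing values) arises, and let I_χ have size n otherwise; write Z(Φ) for the number of satisfying assignments and Z(Φ,χ) for the number of satisfying assignments extending χ. Then Z(Φ) ≤ 2^{|I_χ|}·max(Z(Φ,χ), 1). -/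
open scoped Classical

/-- A 2-SAT clause over variables `x₀, …, x_{n-1}`: a disjunction of the literal of
variable `v` with sign `sv` and the literal of variable `w` with sign `sw`
(sign `true` = positive occurrence). -/
structure Clause (n : ℕ) where
  v : Fin n
  sv : Bool
  w : Fin n
  sw : Bool

/-- `σ` satisfies the clause `c`. -/
def ClauseSat {n : ℕ} (σ : Fin n → Bool) (c : Clause n) : Prop :=
  σ c.v = c.sv ∨ σ c.w = c.sw

/-- `σ` satisfies the whole formula `Φ`. -/
def Sat {n : ℕ} (Φ : Finset (Clause n)) (σ : Fin n → Bool) : Prop :=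
  ∀ c ∈ Φ, ClauseSat σ c

/-- The (variable, value) pairs derived by Unit Clause Propagation from the initial
assignment `χ` on `Y`: whenever a clause has one variable assigned the value failing to
satisfy it, the other variable is assigned the value satisfying the clause. -/
inductive Derived {n : ℕ} (Φ : Finset (Clause n)) (Y : Finset (Fin n))
    (χ : Fin n → Bool) : Fin n → Bool → Prop
  | base {x : Fin n} : x ∈ Y → Derived Φ Y χ x (χ x)
  | fwd {c : Clause n} : c ∈ Φ → Derived Φ Y χ c.v (!c.sv) → Derived Φ Y χ c.w c.sw
  | bwd {c : Clause n} : c ∈ Φ → Derived Φ Y χ c.w (!c.sw) → Derived Φ Y χ c.v c.sv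

/-- Unit Clause Propagation runs into a contradiction: some clause has both of its
variables assigned failing values. -/
def UCPContra {n : ℕ} (Φ : Finset (Clause n)) (Y : Finset (Fin n))
    (χ : Fin n → Bool) : Prop :=
  ∃ c ∈ Φ, Derived Φ Y χ c.v (!c.sv) ∧ Derived Φ Y χ c.w (!c.sw)

/-- The number `|I_χ|`: the number of variables assigned a value upon termination of Unit
Clause Propagation (including `Y`), declared to be `n` if a contradiction arises. -/
noncomputable def UCPsize {n : ℕ} (Φ : Finset (Clause n)) (Y : Finset (Fin n))
    (χ : Fin n → Bool) : ℕ :=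
  if UCPContra Φ Y χ then n else Set.ncard {x : Fin n | ∃ b, Derived Φ Y χ x b}

/-- `Z(Φ)`: the number of satisfying assignments of `Φ`. -/
noncomputable def Z {n : ℕ} (Φ : Finset (Clause n)) : ℕ :=
  Set.ncard {σ : Fin n → Bool | Sat Φ σ}

/-- `Z(Φ,χ)`: the number of satisfying assignments of `Φ` extending `χ : Y → {±1}`. -/
noncomputable def Zext {n : ℕ} (Φ : Finset (Clause n)) (Y : Finset (Fin n))
    (χ : Fin n → Bool) : ℕ :=
  Set.ncard {σ : Fin n → Bool | Sat Φ σ ∧ ∀ y ∈ Y, σ y = χ y}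

/-- For any 2-SAT formula `Φ`, set of variables `Y` and assignment `χ` on `Y`:
`Z(Φ) ≤ 2^{|I_χ|} · max (Z(Φ,χ), 1)`, where `I_χ` comes from Unit Clause Propagation. -/
theorem stmt_13 {n : ℕ} (Φ : Finset (Clause n)) (Y : Finset (Fin n)) (χ : Fin n → Bool) :
    Z Φ ≤ 2 ^ UCPsize Φ Y χ * max (Zext Φ Y χ) 1 := by
  by_cases hc : UCPContra Φ Y χ
  · have h1 : Z Φ ≤ 2 ^ n := by
      have := Set.ncard_le_ncard (Set.subset_univ {σ : Fin n → Bool | Sat Φ σ})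
        Set.finite_univ
      have huniv : (Set.univ : Set (Fin n → Bool)).ncard = 2 ^ n := by
        rw [Set.ncard_univ]
        simp [Nat.card_fun]
      rw [huniv] at this
      exact this
    rw [UCPsize, if_pos hc]
    calc Z Φ ≤ 2 ^ n := h1
      _ = 2 ^ n * 1 := (mul_one _).symm
      _ ≤ 2 ^ n * max (Zext Φ Y χ) 1 := by
          exact Nat.mul_le_mul_left _ (le_max_right _ _)
  · -- no contradiction: derived values are unique
    have hU : ∀ x b b', Derived Φ Y χ x b → Derived Φ Y χ x b' → b = b' := by
      intro x b b' h1 h2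
      by_contra hne
      cases h1 with
      | base hx =>
        cases h2 with
        | base hx2 => exact hne rfl
        | @fwd c hcΦ hd =>
            have hb : χ c.w = !c.sw := by
              cases hx1 : χ c.w <;> cases hx2 : c.sw <;> simp_all
            exact hc ⟨c, hcΦ, hd, hb ▸ Derived.base (Φ := Φ) (χ := χ) hx⟩
        | @bwd c hcΦ hd =>
            have hb : χ c.v = !c.sv := by
              cases hx1 : χ c.v <;> cases hx2 : c.sv <;> simp_all
            exact hc ⟨c, hcΦ, hb ▸ Derived.base (Φ := Φ) (χ := χ) hx, hd⟩
      | @fwd c hcΦ hd =>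
        have hb : b' = !c.sw := by
          cases hx1 : b' <;> cases hx2 : c.sw <;> simp_all
        exact hc ⟨c, hcΦ, hd, hb ▸ h2⟩
      | @bwd c hcΦ hd =>
        have hb : b' = !c.sv := by
          cases hx1 : b' <;> cases hx2 : c.sv <;> simp_all
        exact hc ⟨c, hcΦ, hb ▸ h2, hd⟩
    set I : Set (Fin n) := {x : Fin n | ∃ b, Derived Φ Y χ x b} with hI
    -- the overwrite map
    set F : (Fin n → Bool) → (Fin n → Bool) :=
      fun σ x => if h : ∃ b, Derived Φ Y χ x b then h.choose else σ x with hF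
    have hFmem : ∀ σ x (h : ∃ b, Derived Φ Y χ x b), Derived Φ Y χ x (F σ x) := by
      intro σ x h
      rw [hF]
      simp only [dif_pos h]
      exact h.choose_spec
    have hFnot : ∀ σ x, x ∉ I → F σ x = σ x := by
      intro σ x h
      exact dif_neg h
    have hFext : ∀ σ, ∀ y ∈ Y, F σ y = χ y := by
      intro σ y hy
      have h : ∃ b, Derived Φ Y χ y b := ⟨χ y, Derived.base hy⟩
      exact hU y _ _ (hFmem σ y h) (Derived.base hy)
    have hFsat : ∀ σ, Sat Φ σ → Sat Φ (F σ) := by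
      intro σ hσ c hcΦ
      by_contra hcs
      rw [ClauseSat] at hcs
      push_neg at hcs
      obtain ⟨hv, hw⟩ := hcs
      have hv' : F σ c.v = !c.sv := by cases hb : F σ c.v <;> cases hs : c.sv <;> simp_all
      have hw' : F σ c.w = !c.sw := by cases hb : F σ c.w <;> cases hs : c.sw <;> simp_all
      by_cases hvI : c.v ∈ I
      · have hdv : Derived Φ Y χ c.v (!c.sv) := hv' ▸ hFmem σ c.v hvI
        have hdw : Derived Φ Y χ c.w c.sw := Derived.fwd hcΦ hdv
        have hwI : c.w ∈ I := ⟨_, hdw⟩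
        have := hU c.w _ _ (hFmem σ c.w hwI) hdw
        rw [hw'] at this
        simp at this
      · by_cases hwI : c.w ∈ I
        · have hdw : Derived Φ Y χ c.w (!c.sw) := hw' ▸ hFmem σ c.w hwI
          exact hvI ⟨_, Derived.bwd hcΦ hdw⟩
        · have h1 := hFnot σ c.v hvI
          have h2 := hFnot σ c.w hwI
          rcases hσ c hcΦ with h | h
          · rw [← h1, hv'] at h; simp at h
          · rw [← h2, hw'] at h; simp at h
    -- injection into product
    set S : Set (Fin n → Bool) := {σ | Sat Φ σ} with hS
    set T : Set (Fin n → Bool) := {σ | Sat Φ σ ∧ ∀ y ∈ Y, σ y = χ y} with hT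
    set G : (Fin n → Bool) → (Fin n → Bool) × (I → Bool) :=
      fun σ => (F σ, fun x => σ x.1) with hG
    have hmaps : ∀ σ ∈ S, G σ ∈ T ×ˢ (Set.univ : Set (I → Bool)) := by
      intro σ hσ
      exact ⟨⟨hFsat σ hσ, hFext σ⟩, trivial⟩
    have hinj : Set.InjOn G S := by
      intro σ1 h1 σ2 h2 heq
      rw [hG] at heq
      simp only [Prod.mk.injEq] at heq
      funext x
      by_cases hx : x ∈ I
      · exact congrFun heq.2 ⟨x, hx⟩
      · have := congrFun heq.1 x
        rwa [hFnot σ1 x hx, hFnot σ2 x hx] at this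
    have hcard : S.ncard ≤ (T ×ˢ (Set.univ : Set (I → Bool))).ncard :=
      Set.ncard_le_ncard_of_injOn G hmaps hinj (Set.toFinite _)
    have hprod : (T ×ˢ (Set.univ : Set (I → Bool))).ncard =
        T.ncard * (Set.univ : Set (I → Bool)).ncard := by
      rw [← Nat.card_coe_set_eq, ← Nat.card_coe_set_eq,
        ← Nat.card_coe_set_eq]
      rw [Nat.card_congr (Equiv.Set.prod T (Set.univ : Set (I → Bool)))]
      rw [Nat.card_prod]
    have huniv2 : (Set.univ : Set (I → Bool)).ncard = 2 ^ I.ncard := by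
      rw [Set.ncard_univ, Nat.card_fun, Nat.card_coe_set_eq]
      simp
    have hsize : UCPsize Φ Y χ = I.ncard := by
      rw [UCPsize, if_neg hc]
    rw [hsize]
    calc Z Φ = S.ncard := rfl
      _ ≤ (T ×ˢ (Set.univ : Set (I → Bool))).ncard := hcard
      _ = T.ncard * 2 ^ I.ncard := by rw [hprod, huniv2]
      _ = 2 ^ I.ncard * Zext Φ Y χ := by rw [mul_comm]; rfl
      _ ≤ 2 ^ I.ncard * max (Zext Φ Y χ) 1 := Nat.mul_le_mul_left _ (le_max_left _ _)
end

section
/- Let T be a rooted 2-SAT tree formula (its clause/variable incidence graph is a tree rooted at variable o with boundary variables at depth 2ℓ). Let σ⁺ be the top-down boundary assignment constructed by setting σ⁺_o = 1 and, recursively, for a variable v with parent clause a and grandparent variable u, σ⁺_v = sign(a,v) if sign(a,u) ≠ σ⁺_u and σ⁺_v = -sign(a,v) otherwise. Then for every variable x of T and every satisfying assignment τ of T: Z(T_x, τ, σ⁺_x)/Z(T_x, τ) ≤ Z(T_x, σ⁺, σ⁺_x)/Z(T_x, σ⁺), where T_x is the subtree rooted at x, Z(T_x, τ) counts satisfying assignments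 of T_x agreeing with τ on the depth-2ℓ boundary, and Z(T_x, τ, t) counts those additionally assigning value t to x. -/
/-- A rooted 2-SAT tree formula with variables at even depths and clauses at odd depths,
all boundary (leaf) variables at variable-depth `ℓ`.  A variable node has finitely many
clause-children; the clause `i` contains the parent variable with sign `su i` and the
child variable with sign `sv i` (`true` = positive literal). -/
inductive TF : ℕ → Type
  | leaf : TF 0
  | node {ℓ : ℕ} (k : ℕ) (su sv : Fin k → Bool) (child : Fin k → TF ℓ) : TF (ℓ + 1)

/-- Boundary conditions of a tree formula: one Boolean per depth-`ℓ` (leaf) variable. -/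
def Bd : ∀ {ℓ : ℕ}, TF ℓ → Type
  | _, .leaf => Bool
  | _, .node k _ _ child => ∀ i : Fin k, Bd (child i)

/-- Assignments of all variables of a tree formula. -/
def Asg : ∀ {ℓ : ℕ}, TF ℓ → Type
  | _, .leaf => Bool
  | _, .node k _ _ child => Bool × ∀ i : Fin k, Asg (child i)

/-- Value of the root variable under an assignment. -/
def rootVal : ∀ {ℓ : ℕ} (t : TF ℓ), Asg t → Bool
  | _, .leaf, a => a
  | _, .node _ _ _ _, a => a.1

/-- The boundary condition induced by an assignment. -/
def boundaryOf : ∀ {ℓ : ℕ} (t : TF ℓ), Asg t → Bd t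
  | _, .leaf, a => a
  | _, .node _ _ _ child, a => fun i => boundaryOf (child i) (a.2 i)

/-- The assignment satisfies all clauses of the tree formula. -/
def SatT : ∀ {ℓ : ℕ} (t : TF ℓ), Asg t → Prop
  | _, .leaf, _ => True
  | _, .node _ su sv child, a =>
      ∀ i, (a.1 = su i ∨ rootVal (child i) (a.2 i) = sv i) ∧ SatT (child i) (a.2 i)

/-- `Zb t b r`: the number of satisfying assignments of `t` that agree with the boundary
condition `b` on the depth-`ℓ` variables and assign the value `r` to the root. -/
def Zb : ∀ {ℓ : ℕ} (t : TF ℓ), Bd t → Bool → ℕ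
  | _, .leaf, b, r => if (show Bool from b) = r then 1 else 0
  | _, .node k su sv child, b, r =>
      ∏ i : Fin k, ∑ c : Bool,
        if r = su i ∨ c = sv i then Zb (child i) (b i) c else 0

/-- The extremal boundary condition `σ⁺` constructed top-down from the root value `r`:
a child variable `v` of a clause `a` with parent `u` receives `σ⁺_v = sign(a,v)` if
`sign(a,u) ≠ σ⁺_u`, and `σ⁺_v = -sign(a,v)` otherwise. -/
def sigP : ∀ {ℓ : ℕ} (t : TF ℓ), Bool → Bd t
  | _, .leaf, r => r
  | _, .node _ su sv child, r =>
      fun i => sigP (child i) (if su i = r then !(sv i) else sv i)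

@[simp] lemma boundaryOf_node {ℓ : ℕ} (k : ℕ) (su sv : Fin k → Bool) (child : Fin k → TF ℓ)
    (τ : Asg (TF.node k su sv child)) (i : Fin k) :
    boundaryOf (.node k su sv child) τ i = boundaryOf (child i) (τ.2 i) := rfl

@[simp] lemma sigP_node {ℓ : ℕ} (k : ℕ) (su sv : Fin k → Bool) (child : Fin k → TF ℓ)
    (r : Bool) (i : Fin k) :
    sigP (.node k su sv child) r i = sigP (child i) (if su i = r then !(sv i) else sv i) := rfl

@[simp] lemma rootVal_node {ℓ : ℕ} (k : ℕ) (su sv : Fin k → Bool) (child : Fin k → TF ℓ)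
    (τ : Asg (TF.node k su sv child)) : rootVal (.node k su sv child) τ = τ.1 := rfl

lemma Zb_node {ℓ : ℕ} (k : ℕ) (su sv : Fin k → Bool) (child : Fin k → TF ℓ)
    (b : Bd (TF.node k su sv child)) (r : Bool) :
    Zb (.node k su sv child) b r
      = ∏ i : Fin k, (if r = su i then Zb (child i) (b i) true + Zb (child i) (b i) false
          else Zb (child i) (b i) (sv i)) := by
  show (∏ i : Fin k, ∑ c : Bool, if r = su i ∨ c = sv i then Zb (child i) (b i) c else 0) = _
  refine Finset.prod_congr rfl fun i _ => ?_
  by_cases h : r = su i <;> simp [h, Fintype.sum_bool]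

lemma Zb_le_sum {ℓ : ℕ} (t : TF ℓ) (b : Bd t) (c : Bool) :
    Zb t b c ≤ Zb t b true + Zb t b false := by cases c <;> omega

lemma sat_pos {ℓ : ℕ} (t : TF ℓ) : ∀ (τ : Asg t), SatT t τ →
    1 ≤ Zb t (boundaryOf t τ) (rootVal t τ) := by
  induction t with
  | leaf => intro τ _; have hb : ∀ b : Bool, 1 ≤ Zb TF.leaf b b := (by intro b; cases b <;> decide); exact hb τ
  | node k su sv child ih =>
    intro τ hτ
    rw [Zb_node]
    refine Finset.one_le_prod' fun i _ => ?_
    have h2 := ih i (τ.2 i) (hτ i).2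
    simp only [boundaryOf_node k su sv child τ, rootVal_node k su sv child τ]
    by_cases h : τ.1 = su i
    · simp only [h, if_true]
      exact le_trans h2 (Zb_le_sum _ _ _)
    · simp only [h, if_false]
      rcases (hτ i).1 with h1 | h1
      · exact absurd h1 h
      · rwa [← h1]

lemma sigP_pos {ℓ : ℕ} (t : TF ℓ) : ∀ (r : Bool), 1 ≤ Zb t (sigP t r) r := by
  induction t with
  | leaf => intro r; simp [Zb, sigP]
  | node k su sv child ih =>
    intro r
    rw [Zb_node]
    refine Finset.one_le_prod' fun i _ => ?_
    by_cases h : su i = r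
    · simp only [sigP_node k su sv child r, if_pos h, if_pos h.symm]
      exact le_trans (ih i (!(sv i))) (Zb_le_sum _ _ _)
    · have h' : ¬ r = su i := fun hh => h hh.symm
      simp only [sigP_node k su sv child r, if_neg h, if_neg h']
      exact ih i (sv i)

lemma key_s18 {ℓ : ℕ} (t : TF ℓ) : ∀ (r : Bool) (τ : Asg t), SatT t τ →
    Zb t (boundaryOf t τ) r * Zb t (sigP t r) (!r)
      ≤ Zb t (sigP t r) r * Zb t (boundaryOf t τ) (!r) := by
  induction t with
  | leaf => intro r τ _; cases r <;> simp [Zb, sigP, boundaryOf]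
  | node k su sv child ih =>
    intro r τ hτ
    simp only [Zb_node, boundaryOf_node k su sv child τ, sigP_node k su sv child r]
    rw [← Finset.prod_mul_distrib, ← Finset.prod_mul_distrib]
    refine Finset.prod_le_prod' fun i _ => ?_
    set A : Bool → ℕ := Zb (child i) (boundaryOf (child i) (τ.2 i)) with hA
    by_cases h : r = su i
    · have hc : (if su i = r then !(sv i) else sv i) = !(sv i) := if_pos h.symm
      rw [hc]
      set B : Bool → ℕ := Zb (child i) (sigP (child i) (!(sv i))) with hB
      have hnr : ¬ ((!r) = su i) := by rw [← h]; exact Bool.not_ne_self r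
      rw [if_pos h, if_neg hnr, if_pos h, if_neg hnr]
      have hih := ih i (!(sv i)) (τ.2 i) (hτ i).2
      rw [Bool.not_not, ← hA, ← hB] at hih
      -- hih : A (!sv i) * B (sv i) ≤ B (!sv i) * A (sv i)
      cases hs : sv i <;> rw [hs] at hih <;> simp only [Bool.not_false, Bool.not_true] at hih ⊢ <;>
        nlinarith [hih]
    · have hc : (if su i = r then !(sv i) else sv i) = sv i :=
        if_neg (fun hh => h hh.symm)
      rw [hc]
      set B : Bool → ℕ := Zb (child i) (sigP (child i) (sv i)) with hB
      have hnr : (!r) = su i := by cases r <;> cases hsu : su i <;> first | rfl | exact absurd hsu.symm h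
      rw [if_neg h, if_pos hnr, if_neg h, if_pos hnr]
      have hih := ih i (sv i) (τ.2 i) (hτ i).2
      rw [← hA, ← hB] at hih
      cases hs : sv i <;> rw [hs] at hih <;> simp only [Bool.not_false, Bool.not_true] at hih ⊢ <;>
        nlinarith [hih]

/-- Extremality of the boundary condition `σ⁺` (Claim for every subtree rooted at a
variable `x` with designated value `r = σ⁺_x`): for every satisfying assignment `τ`,
`Z(T_x, τ, σ⁺_x) / Z(T_x, τ) ≤ Z(T_x, σ⁺, σ⁺_x) / Z(T_x, σ⁺)`. -/
theorem stmt_18 {ℓ : ℕ} (t : TF ℓ) (r : Bool) (τ : Asg t) (hτ : SatT t τ) :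
    (Zb t (boundaryOf t τ) r : ℝ) /
        ((Zb t (boundaryOf t τ) true + Zb t (boundaryOf t τ) false : ℕ) : ℝ) ≤
      (Zb t (sigP t r) r : ℝ) /
        ((Zb t (sigP t r) true + Zb t (sigP t r) false : ℕ) : ℝ) := by
  have hd1n : 1 ≤ Zb t (boundaryOf t τ) true + Zb t (boundaryOf t τ) false :=
    le_trans (sat_pos t τ hτ) (Zb_le_sum _ _ _)
  have hd2n : 1 ≤ Zb t (sigP t r) true + Zb t (sigP t r) false :=
    le_trans (sigP_pos t r) (Zb_le_sum _ _ _)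
  have hd1 : (0:ℝ) < ((Zb t (boundaryOf t τ) true + Zb t (boundaryOf t τ) false : ℕ) : ℝ) := by
    exact_mod_cast Nat.lt_of_lt_of_le Nat.zero_lt_one hd1n
  have hd2 : (0:ℝ) < ((Zb t (sigP t r) true + Zb t (sigP t r) false : ℕ) : ℝ) := by
    exact_mod_cast Nat.lt_of_lt_of_le Nat.zero_lt_one hd2n
  rw [div_le_div_iff₀ hd1 hd2]
  have hk : ((Zb t (boundaryOf t τ) r * Zb t (sigP t r) (!r) : ℕ) : ℝ)
      ≤ ((Zb t (sigP t r) r * Zb t (boundaryOf t τ) (!r) : ℕ) : ℝ) := by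
    exact_mod_cast key_s18 t r τ hτ
  push_cast at hk ⊢
  cases r <;> simp only [Bool.not_false, Bool.not_true] at hk <;> nlinarith [hk]
end

section
/- Let T be a (possibly infinite) 2-SAT tree formula and x a variable of T, s ∈ {±1}. Define the implication subtree T_{x,s} by imposing value s on x and recursively, for each clause-child a of an assigned variable y that is not satisfied by y's imposed value, imposing on the other variable z of a the value sign(a,z). Then the imposed values constitute a partial assignment satisfying every clause of T that contains at least one variable of T_{x,s}, and any leaf variable y of T_{x,s} has all its clause-children in T automatically satisfied by its imposed value. -/
/-- A (possibly infinite) rooted 2-SAT tree formula: variable nodes are finite sequences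
(paths from the root `[]`); the variable node `p` has `k p` clause-children, and its
`j`-th clause contains the parent variable `p` with sign `su p j` and the child variable
`p ++ [j]` with sign `sv p j` (`true` = positive literal). -/
structure TreeFormula where
  k : List ℕ → ℕ
  su : List ℕ → ℕ → Bool
  sv : List ℕ → ℕ → Bool

/-- `ValidExt T pre path` : starting from the variable node `pre`, `path` descends through
existing clause-children at every step. -/
def ValidExt (T : TreeFormula) : List ℕ → List ℕ → Prop
  | _, [] => True
  | pre, j :: rest => j < T.k pre ∧ ValidExt T (pre ++ [j]) rest

/-- The value (if any) imposed on the node `pre ++ path` by the top-down implication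
process, given that `pre` carries the imposed value `s`: a clause already satisfied by the
parent's imposed value is not traversed, while an unsatisfied clause forces on its child
variable the value of its literal sign. -/
def imp (T : TreeFormula) : Bool → List ℕ → List ℕ → Option Bool
  | s, _, [] => some s
  | s, pre, j :: rest =>
      if s = T.su pre j then none else imp T (T.sv pre j) (pre ++ [j]) rest

/-- The partial assignment of the implication subtree `T_{x,s}` rooted at the root
variable `x = []` with initial imposed value `s`. -/
def imposed (T : TreeFormula) (s : Bool) (p : List ℕ) : Option Bool := imp T s [] p

lemma imp_append (T : TreeFormula) : ∀ (path : List ℕ) (s : Bool) (pre : List ℕ) (j : ℕ),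
    imp T s pre (path ++ [j]) =
      (imp T s pre path).bind
        (fun b => if b = T.su (pre ++ path) j then none else some (T.sv (pre ++ path) j)) := by
  intro path
  induction path with
  | nil => intro s pre j; simp [imp]
  | cons a rest ih =>
      intro s pre j
      simp only [List.cons_append, imp]
      by_cases h : s = T.su pre a
      · simp [h]
      · simp only [if_neg h, List.append_eq]
        rw [ih]
        simp [List.append_assoc]

/-- The imposed values form a partial assignment satisfying every clause of `T` that
contains at least one variable of the implication subtree `T_{x,s}`; moreover every leaf
variable of `T_{x,s}` (an imposed variable none of whose clause-children's variables is
imposed) has all of its clause-children automatically satisfied by its imposed value. -/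
theorem stmt_19 (T : TreeFormula) (s : Bool) :
    (∀ p : List ℕ, ValidExt T [] p → ∀ j : ℕ, j < T.k p →
      (imposed T s p ≠ none ∨ imposed T s (p ++ [j]) ≠ none) →
      (imposed T s p = some (T.su p j) ∨ imposed T s (p ++ [j]) = some (T.sv p j))) ∧
    (∀ p : List ℕ, ValidExt T [] p → ∀ b : Bool, imposed T s p = some b →
      (∀ j : ℕ, j < T.k p → imposed T s (p ++ [j]) = none) →
      ∀ j : ℕ, j < T.k p → b = T.su p j) := by
  constructor
  · intro p _ j _ h
    rcases ho : imposed T s p with _ | b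
    · exfalso
      rcases h with h | h
      · exact h ho
      · exact h (by simp [imposed, imp_append, show imp T s [] p = none from ho])
    · by_cases hb : b = T.su p j
      · exact Or.inl (by rw [hb])
      · right
        simp [imposed, imp_append]
        simp only [imposed] at ho
        rw [ho]
        simp [hb]
  · intro p _ b hb hnone j hj
    by_contra hne
    have := hnone j hj
    simp only [imposed, imp_append] at this
    simp only [imposed] at hb
    rw [hb] at this
    simp [hne] at this
end
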